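/- For any fixed nonzero vector c in F_2^{2N}, if a symplectic self-dual subspace C of F_2^{2N} is chosen uniformly at random, then the probability that c ∈ C equals 1/(2^N + 1). -/

import Mathlib

/-- `F_2^{2N}`, grouped into `N` blocks of two coordinates. -/
abbrev V (N : ℕ) := Fin N → ZMod 2 × ZMod 2

/-- The standard symplectic product `u ⊙ v = uᵀ P v` on `F_2^{2N}`, where `P` is
block-diagonal with `N` antidiagonal `2×2` blocks. -/
def symp {N : ℕ} (u v : V N) : ZMod 2 :=
  ∑ n, ((u n).1 * (v n).2 + (u n).2 * (v n).1)

/-- The symplectic dual `C^⊥ = {u : ∀ v ∈ C, u ⊙ v = 0}` of a subspace `C ⊆ F_2^{2N}`. -/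
def sympDual {N : ℕ} (C : Submodule (ZMod 2) (V N)) : Submodule (ZMod 2) (V N) where
  carrier := {u | ∀ v ∈ C, symp u v = 0}
  zero_mem' := by intro v hv; simp [symp]
  add_mem' := by
    intro a b ha hb v hv
    have h : symp (a + b) v = symp a v + symp b v := by
      simp only [symp, ← Finset.sum_add_distrib]
      refine Finset.sum_congr rfl fun n _ => ?_
      simp [Prod.fst_add, Prod.snd_add]; ring
    rw [h, ha v hv, hb v hv, add_zero]
  smul_mem' := by
    intro c u hu v hv
    have h : symp (c • u) v = c * symp u v := by
      simp only [symp, Finset.mul_sum]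
      refine Finset.sum_congr rfl fun n _ => ?_
      simp [Prod.smul_fst, Prod.smul_snd, smul_eq_mul]; ring
    rw [h, hu v hv, mul_zero]



lemma symp_comm {N : ℕ} (u v : V N) : symp u v = symp v u := by
  unfold symp; refine Finset.sum_congr rfl fun n _ => ?_; ring

lemma symp_add_left {N : ℕ} (u v w : V N) : symp (u + v) w = symp u w + symp v w := by
  unfold symp; rw [← Finset.sum_add_distrib]
  refine Finset.sum_congr rfl fun n _ => ?_
  simp [Prod.fst_add, Prod.snd_add]; ring

lemma symp_add_right {N : ℕ} (u v w : V N) : symp u (v + w) = symp u v + symp u w := by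
  rw [symp_comm, symp_add_left, symp_comm v, symp_comm w]

lemma symp_smul_left {N : ℕ} (a : ZMod 2) (u v : V N) : symp (a • u) v = a * symp u v := by
  unfold symp; rw [Finset.mul_sum]
  refine Finset.sum_congr rfl fun n _ => ?_
  simp [Prod.smul_fst, Prod.smul_snd, smul_eq_mul]; ring

lemma symp_self {N : ℕ} (u : V N) : symp u u = 0 := by
  unfold symp
  refine Finset.sum_eq_zero fun n _ => ?_
  have : ∀ a : ZMod 2, a + a = 0 := by decide
  rw [mul_comm]; exact this _

noncomputable def sympB (N : ℕ) : LinearMap.BilinForm (ZMod 2) (V N) :=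
  LinearMap.mk₂ (ZMod 2) symp symp_add_left (fun a u v => by rw [symp_smul_left]; rfl)
    symp_add_right (fun a u v => by rw [symp_comm, symp_smul_left, symp_comm]; rfl)

@[simp] lemma sympB_apply {N : ℕ} (u v : V N) : sympB N u v = symp u v := rfl

lemma symp_single {N : ℕ} (u : V N) (n : Fin N) (p : ZMod 2 × ZMod 2) :
    symp u (Pi.single n p) = (u n).1 * p.2 + (u n).2 * p.1 := by
  unfold symp
  rw [Finset.sum_eq_single n]
  · simp
  · intro m _ hm; simp [Pi.single_eq_of_ne hm]
  · intro h; exact absurd (Finset.mem_univ n) h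

lemma sympB_refl (N : ℕ) : (sympB N).IsRefl := by
  intro u v h; rwa [sympB_apply, symp_comm, ← sympB_apply]

lemma sympB_nondegenerate (N : ℕ) : (sympB N).Nondegenerate := by
  have hL : ∀ u : V N, (∀ v, sympB N u v = 0) → u = 0 := by
    intro u h
    funext n
    have h1 := h (Pi.single n (0, 1))
    have h2 := h (Pi.single n (1, 0))
    rw [sympB_apply, symp_single] at h1 h2
    simp only [mul_one, mul_zero, add_zero, zero_add] at h1 h2
    ext <;> simpa
  refine ⟨hL, fun u h => hL u fun v => ?_⟩
  rw [sympB_apply, symp_comm, ← sympB_apply]; exact h v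


lemma sympDual_eq_orthogonal {N : ℕ} (C : Submodule (ZMod 2) (V N)) :
    sympDual C = (sympB N).orthogonal C := by
  ext u
  constructor
  · intro h v hv
    show sympB N v u = 0
    rw [sympB_apply, symp_comm]; exact h v hv
  · intro h v hv
    have := h v hv
    rw [sympB_apply, symp_comm] at this
    exact this

lemma finrank_V (N : ℕ) : Module.finrank (ZMod 2) (V N) = 2 * N := by
  simp [Module.finrank_pi_fintype, Module.finrank_prod]
  ring

lemma finrank_selfdual {N : ℕ} {C : Submodule (ZMod 2) (V N)} (h : C = sympDual C) :
    Module.finrank (ZMod 2) C = N := by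
  have := LinearMap.BilinForm.finrank_orthogonal (sympB_nondegenerate N) C
  rw [← sympDual_eq_orthogonal, ← h, finrank_V] at this
  omega

lemma zmod2_add_self (a : ZMod 2) : a + a = 0 := by
  have : ∀ b : ZMod 2, b + b = 0 := by decide
  exact this a

lemma symp_smul_right {N : ℕ} (a : ZMod 2) (u v : V N) : symp u (a • v) = a * symp u v := by
  rw [symp_comm, symp_smul_left, symp_comm]

lemma card_selfdual {N : ℕ} {C : Submodule (ZMod 2) (V N)} (h : C = sympDual C) :
    Nat.card C = 2 ^ N := by
  have : Fintype C := Fintype.ofFinite _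
  rw [Nat.card_eq_fintype_card, Module.card_eq_pow_finrank (K := ZMod 2) (V := C),
    ZMod.card, finrank_selfdual h]

/-- Transvection by `w`. -/
def transv {N : ℕ} (w : V N) : V N ≃ₗ[ZMod 2] V N where
  toFun x := x + symp x w • w
  invFun x := x + symp x w • w
  map_add' x y := by
    show x + y + symp (x + y) w • w = _
    rw [symp_add_left, add_smul]; abel
  map_smul' a x := by
    show a • x + symp (a • x) w • w = a • (x + symp x w • w)
    rw [symp_smul_left, smul_add, mul_smul]
  left_inv x := by
    show x + symp x w • w + symp (x + symp x w • w) w • w = x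
    simp only [symp_add_left, symp_smul_left, symp_self, mul_zero, add_zero]
    rw [add_assoc, ← add_smul, zmod2_add_self, zero_smul, add_zero]
  right_inv x := by
    show x + symp x w • w + symp (x + symp x w • w) w • w = x
    simp only [symp_add_left, symp_smul_left, symp_self, mul_zero, add_zero]
    rw [add_assoc, ← add_smul, zmod2_add_self, zero_smul, add_zero]

lemma symp_transv {N : ℕ} (w x y : V N) : symp (transv w x) (transv w y) = symp x y := by
  show symp (x + symp x w • w) (y + symp y w • w) = symp x y
  rw [symp_add_left, symp_add_right, symp_add_right, symp_smul_left, symp_smul_right,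
    symp_smul_right, symp_smul_left, symp_self, symp_comm w y]
  ring_nf
  generalize symp x y = a
  generalize symp x w = b
  generalize symp y w = c
  have : ∀ a b c : ZMod 2, a + c * b * 2 = a := by decide
  exact this a b c

lemma add_self_eq_zero' {N : ℕ} (x : V N) : x + x = 0 := by
  have : x + x = (2 : ZMod 2) • x := by rw [two_smul]
  rw [this, show (2 : ZMod 2) = 0 by decide, zero_smul]

lemma exists_symp_one {N : ℕ} {c : V N} (hc : c ≠ 0) : ∃ v, symp c v = 1 := by
  by_contra h
  push_neg at h
  apply hc
  apply (sympB_nondegenerate N).1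
  intro v
  have := h v
  rw [sympB_apply]
  have h01 : ∀ a : ZMod 2, a ≠ 1 → a = 0 := by decide
  exact h01 _ (h v)

lemma symp_transitive {N : ℕ} {c c' : V N} (hc : c ≠ 0) (hc' : c' ≠ 0) :
    ∃ f : V N ≃ₗ[ZMod 2] V N, (∀ x y, symp (f x) (f y) = symp x y) ∧ f c = c' := by
  have h01 : ∀ a : ZMod 2, a ≠ 1 → a = 0 := by decide
  by_cases heq : c = c'
  · exact ⟨LinearEquiv.refl _ _, fun x y => rfl, heq⟩
  by_cases h1 : symp c c' = 1
  · refine ⟨transv (c + c'), symp_transv _, ?_⟩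
    show c + symp c (c + c') • (c + c') = c'
    rw [symp_add_right, symp_self, zero_add, h1, one_smul, ← add_assoc, add_self_eq_zero',
      zero_add]
  · -- symp c c' = 0
    have h0 : symp c c' = 0 := h01 _ h1
    obtain ⟨v0, hv0⟩ := exists_symp_one hc
    obtain ⟨v1, hv1⟩ := exists_symp_one hc'
    have key : ∃ w, symp c w = 1 ∧ symp c' w = 1 := by
      by_cases ha : symp c' v0 = 1
      · exact ⟨v0, hv0, ha⟩
      by_cases hb : symp c v1 = 1
      · exact ⟨v1, hb, hv1⟩
      · refine ⟨v0 + v1, ?_, ?_⟩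
        · rw [symp_add_right, hv0, h01 _ hb, add_zero]
        · rw [symp_add_right, h01 _ ha, hv1, zero_add]
    obtain ⟨w, hw1, hw2⟩ := key
    refine ⟨(transv (c + w)).trans (transv (c' + w)), ?_, ?_⟩
    · intro x y
      show symp (transv (c' + w) (transv (c + w) x)) (transv (c' + w) (transv (c + w) y)) = _
      rw [symp_transv, symp_transv]
    · show transv (c' + w) (transv (c + w) c) = c'
      have step1 : transv (c + w) c = w := by
        show c + symp c (c + w) • (c + w) = w
        rw [symp_add_right, symp_self, zero_add, hw1, one_smul, ← add_assoc, add_self_eq_zero',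
          zero_add]
      rw [step1]
      show w + symp w (c' + w) • (c' + w) = c'
      rw [symp_add_right, symp_self, add_zero, symp_comm, hw2, one_smul, ← add_assoc]
      rw [add_comm w c', add_assoc, add_self_eq_zero', add_zero]

lemma sympDual_map {N : ℕ} (f : V N ≃ₗ[ZMod 2] V N) (hf : ∀ x y, symp (f x) (f y) = symp x y)
    (C : Submodule (ZMod 2) (V N)) :
    sympDual (C.map (f : V N →ₗ[ZMod 2] V N)) = (sympDual C).map (f : V N →ₗ[ZMod 2] V N) := by
  ext x
  rw [Submodule.mem_map_equiv]
  constructor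
  · intro h v hv
    have := h (f v) (Submodule.mem_map_of_mem hv)
    rwa [show x = f (f.symm x) by simp, hf] at this
  · intro h v hv
    rw [Submodule.mem_map] at hv
    obtain ⟨u, hu, rfl⟩ := hv
    simp only [LinearEquiv.coe_coe]
    rw [show x = f (f.symm x) by simp, hf]
    exact h u hu

lemma card_mem_eq {N : ℕ} {c c' : V N} (hc : c ≠ 0) (hc' : c' ≠ 0) :
    Nat.card {C : Submodule (ZMod 2) (V N) // C = sympDual C ∧ c ∈ C} =
    Nat.card {C : Submodule (ZMod 2) (V N) // C = sympDual C ∧ c' ∈ C} := by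
  obtain ⟨f, hf, hfc⟩ := symp_transitive hc hc'
  have hfsymm : ∀ x y, symp (f.symm x) (f.symm y) = symp x y := by
    intro x y
    rw [← hf (f.symm x) (f.symm y)]; simp
  have key : ∀ (g : V N ≃ₗ[ZMod 2] V N), (∀ x y, symp (g x) (g y) = symp x y) →
      ∀ (C : Submodule (ZMod 2) (V N)), C = sympDual C →
      C.map (g : V N →ₗ[ZMod 2] V N) = sympDual (C.map (g : V N →ₗ[ZMod 2] V N)) := by
    intro g hg C hC
    rw [sympDual_map g hg, ← hC]
  refine Nat.card_eq_of_bijective (fun C => ⟨C.1.map (f : V N →ₗ[ZMod 2] V N),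
      key f hf C.1 C.2.1, hfc ▸ Submodule.mem_map_of_mem C.2.2⟩) ?_
  constructor
  · rintro ⟨C, hC⟩ ⟨D, hD⟩ h
    simp only [Subtype.mk_eq_mk] at h ⊢
    exact Submodule.map_injective_of_injective f.injective h
  · rintro ⟨D, hD, hcD⟩
    refine ⟨⟨D.map (f.symm : V N →ₗ[ZMod 2] V N), key f.symm hfsymm D hD, ?_⟩, ?_⟩
    · have : f.symm c' ∈ D.map (f.symm : V N →ₗ[ZMod 2] V N) := Submodule.mem_map_of_mem hcD
      rwa [← hfc, LinearEquiv.symm_apply_apply] at this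
    · ext x
      simp [Submodule.mem_map_equiv]

/-- The standard self-dual subspace: second coordinates vanish. -/
def C0 (N : ℕ) : Submodule (ZMod 2) (V N) where
  carrier := {u | ∀ n, (u n).2 = 0}
  zero_mem' := by intro n; rfl
  add_mem' := by intro a b ha hb n; simp [Prod.snd_add, ha n, hb n]
  smul_mem' := by intro a u hu n; simp [Prod.smul_snd, hu n]

lemma C0_selfdual (N : ℕ) : C0 N = sympDual (C0 N) := by
  ext u
  constructor
  · intro hu v hv
    unfold symp
    refine Finset.sum_eq_zero fun n _ => ?_
    rw [hu n, hv n, mul_zero, zero_mul, add_zero]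
  · intro hu n
    have := hu (Pi.single n (1, 0)) (by
      intro m
      by_cases hm : m = n
      · subst hm; simp
      · simp [Pi.single_eq_of_ne hm])
    rw [symp_single] at this
    simpa using this


/-- For any fixed nonzero `c ∈ F_2^{2N}`, a uniformly random symplectic
self-dual subspace `C` of `F_2^{2N}` contains `c` with probability `1/(2^N + 1)`:
(number of self-dual subspaces containing `c`) / (total number of self-dual subspaces)
`= 1/(2^N + 1)`. -/
theorem stmt4 (N : ℕ) (c : V N) (hc : c ≠ 0) :
    ((Nat.card {C : Submodule (ZMod 2) (V N) // C = sympDual C ∧ c ∈ C} : ℝ)) /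
      ((Nat.card {C : Submodule (ZMod 2) (V N) // C = sympDual C} : ℝ)) =
      1 / (2 ^ N + 1) := by
  classical
  have hN : 1 ≤ N := by
    rcases Nat.eq_zero_or_pos N with h | h
    · subst h; exact absurd (Subsingleton.elim c 0) hc
    · exact h
  have hfin : Finite (Submodule (ZMod 2) (V N)) :=
    Finite.of_injective (fun C => (C : Set (V N))) SetLike.coe_injective
  have : Fintype (Submodule (ZMod 2) (V N)) := Fintype.ofFinite _
  set SD : Finset (Submodule (ZMod 2) (V N)) :=
    Finset.univ.filter (fun C => C = sympDual C) with hSD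
  -- m and den as Finset cards
  have hm : ∀ c' : V N, Nat.card {C : Submodule (ZMod 2) (V N) // C = sympDual C ∧ c' ∈ C} =
      (SD.filter (fun C => c' ∈ C)).card := by
    intro c'
    rw [Nat.card_eq_fintype_card, Fintype.card_subtype, hSD, Finset.filter_filter]
  have hden : Nat.card {C : Submodule (ZMod 2) (V N) // C = sympDual C} = SD.card := by
    rw [Nat.card_eq_fintype_card, Fintype.card_subtype]
  -- nonzero vectors
  set NZ : Finset (V N) := Finset.univ.filter (fun v => v ≠ 0) with hNZ
  have hNZcard : NZ.card = 2 ^ (2 * N) - 1 := by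
    rw [hNZ, Finset.filter_ne', Finset.card_erase_of_mem (Finset.mem_univ _),
      Finset.card_univ]
    congr 1
    rw [Fintype.card_fun, Fintype.card_prod, ZMod.card, Fintype.card_fin, pow_mul]; norm_num
  -- per-subspace count of nonzero vectors
  have hfiber : ∀ C ∈ SD, (NZ.filter (fun v => v ∈ C)).card = 2 ^ N - 1 := by
    intro C hC
    have hCd : C = sympDual C := (Finset.mem_filter.mp hC).2
    have hcard : (Finset.univ.filter (fun v : V N => v ∈ C)).card = 2 ^ N := by
      rw [← Fintype.card_subtype, ← Nat.card_eq_fintype_card, card_selfdual hCd]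
    have heq : NZ.filter (fun v => v ∈ C) =
        (Finset.univ.filter (fun v : V N => v ∈ C)).erase 0 := by
      ext v
      simp only [hNZ, Finset.mem_filter, Finset.mem_erase, Finset.mem_univ, true_and,
        Finset.filter_filter]
    rw [heq, Finset.card_erase_of_mem (by simp [C.zero_mem]), hcard]
  -- double counting
  have hsum : ∑ c' ∈ NZ, (SD.filter (fun C => c' ∈ C)).card = SD.card * (2 ^ N - 1) := by
    calc ∑ c' ∈ NZ, (SD.filter (fun C => c' ∈ C)).card
        = ∑ c' ∈ NZ, ∑ C ∈ SD, if c' ∈ C then 1 else 0 := by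
          refine Finset.sum_congr rfl fun c' _ => ?_
          rw [Finset.card_filter]
      _ = ∑ C ∈ SD, ∑ c' ∈ NZ, if c' ∈ C then 1 else 0 := Finset.sum_comm
      _ = ∑ C ∈ SD, (NZ.filter (fun v => v ∈ C)).card := by
          refine Finset.sum_congr rfl fun C _ => ?_
          rw [Finset.card_filter]
      _ = ∑ C ∈ SD, (2 ^ N - 1) := Finset.sum_congr rfl hfiber
      _ = SD.card * (2 ^ N - 1) := by rw [Finset.sum_const, smul_eq_mul]
  -- all fibers over nonzero c' are equal
  set m : ℕ := (SD.filter (fun C => c ∈ C)).card with hmdef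
  have hconst : ∀ c' ∈ NZ, (SD.filter (fun C => c' ∈ C)).card = m := by
    intro c' hc'
    have hc'0 : c' ≠ 0 := (Finset.mem_filter.mp hc').2
    rw [← hm c', card_mem_eq hc'0 hc, hm c]
  have hkey : (2 ^ (2 * N) - 1) * m = SD.card * (2 ^ N - 1) := by
    rw [← hsum, Finset.sum_congr rfl hconst, Finset.sum_const, smul_eq_mul, hNZcard]
  -- SD is nonempty
  have hSDpos : 0 < SD.card := by
    refine Finset.card_pos.mpr ⟨C0 N, ?_⟩
    rw [hSD, Finset.mem_filter]
    exact ⟨Finset.mem_univ _, C0_selfdual N⟩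
  -- now real arithmetic
  rw [hm c, hden, ← hmdef]
  have h2N : (1 : ℕ) ≤ 2 ^ N := Nat.one_le_two_pow
  have h22N : (1 : ℕ) ≤ 2 ^ (2 * N) := Nat.one_le_two_pow
  have hkeyR : ((2 : ℝ) ^ (2 * N) - 1) * m = SD.card * ((2 : ℝ) ^ N - 1) := by
    have := congrArg (fun n : ℕ => (n : ℝ)) hkey
    push_cast [Nat.cast_sub h2N, Nat.cast_sub h22N] at this
    exact_mod_cast this
  have hfact : ((2 : ℝ) ^ (2 * N) - 1) = ((2 : ℝ) ^ N - 1) * ((2 : ℝ) ^ N + 1) := by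
    rw [two_mul, pow_add]; ring
  have hpow1 : (1 : ℝ) < 2 ^ N := by
    have : (2 : ℝ) ^ 0 < 2 ^ N := by
      apply pow_lt_pow_right₀ one_lt_two (by omega)
    simpa using this
  have hne1 : (2 : ℝ) ^ N - 1 ≠ 0 := by linarith
  have hne2 : (2 : ℝ) ^ N + 1 ≠ 0 := by positivity
  have hdenne : (SD.card : ℝ) ≠ 0 := Nat.cast_ne_zero.mpr hSDpos.ne'
  have hmain : ((2 : ℝ) ^ N + 1) * m = SD.card := by
    have h := hkeyR
    rw [hfact] at h
    apply mul_left_cancel₀ hne1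
    calc ((2:ℝ)^N - 1) * (((2:ℝ)^N + 1) * m) = ((2:ℝ)^N - 1) * ((2:ℝ)^N + 1) * m := by ring
      _ = (SD.card : ℝ) * ((2:ℝ)^N - 1) := h
      _ = ((2:ℝ)^N - 1) * SD.card := by ring
  rw [div_eq_div_iff hdenne hne2, one_mul, ← hmain]
  ring
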